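/- Let Δ > 0, p, q ∈ ℤ, and let f : ℝ × ℝ → ℝ be measurable such that the function (x,u) ↦ Σ_{j∈ℤ} f(x, u+jΔ)² belongs to L²(ℝ × [0,Δ]). For r ∈ ℤ define G̃_{r;Δ} : ℝ × ℝ → [0,∞] by G̃_{r;Δ}(x,u) = Σ_{j∈ℤ} |f(x, u+jΔ)| · |f(x, u+(j+r)Δ)| (so that G̃_{r;Δ}(x, u + Δ) = G̃_{r;Δ}(x,u) for all u). Then ∫_{ℝ×ℝ} G̃_{p;Δ}(x,s) · |f(x,s)| · |f(x, s + qΔ)| dx ds = ∫_{ℝ×[0,Δ]} G̃_{p;Δ}(x,u) · G̃_{q;Δ}(x,u) dx du < ∞. -/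
import Mathlib


open MeasureTheory Set
open scoped ENNReal

lemma tsum_shift (g : ℤ → ℝ≥0∞) (k : ℤ) : ∑' j : ℤ, g (j + k) = ∑' j : ℤ, g j :=
  (Equiv.addRight k).tsum_eq g

lemma lintegral_periodization {Δ : ℝ} (hΔ : 0 < Δ) {h : ℝ → ℝ≥0∞} (hm : Measurable h) :
    ∫⁻ s : ℝ, h s = ∫⁻ u in Ico (0:ℝ) Δ, ∑' j : ℤ, h (u + (j : ℝ) * Δ) := by
  have hset : ∀ j : ℤ, Ico ((j : ℤ) • Δ) ((j + 1) • Δ) = Ico ((j : ℝ) * Δ) ((j : ℝ) * Δ + Δ) := by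
    intro j
    simp only [zsmul_eq_mul]
    push_cast
    rw [add_one_mul]
  have h1 : ∫⁻ s : ℝ, h s = ∑' j : ℤ, ∫⁻ s in Ico ((j : ℝ) * Δ) ((j : ℝ) * Δ + Δ), h s := by
    conv_lhs => rw [← Measure.restrict_univ (μ := (volume : Measure ℝ)),
      ← iUnion_Ico_zsmul hΔ]
    rw [lintegral_iUnion (fun j => measurableSet_Ico)
      (pairwise_disjoint_Ico_zsmul Δ) h]
    exact tsum_congr fun j => by rw [hset]
  have h2 : ∀ j : ℤ, ∫⁻ s in Ico ((j : ℝ) * Δ) ((j : ℝ) * Δ + Δ), h s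
      = ∫⁻ u in Ico (0:ℝ) Δ, h (u + (j : ℝ) * Δ) := by
    intro j
    have hmap : Measure.map (· + (j : ℝ) * Δ) volume = volume :=
      map_add_right_eq_self volume _
    have hpre : (· + (j : ℝ) * Δ) ⁻¹' Ico ((j : ℝ) * Δ) ((j : ℝ) * Δ + Δ) = Ico (0:ℝ) Δ := by
      ext u
      simp only [mem_preimage, mem_Ico]
      constructor
      · rintro ⟨ha, hb⟩; constructor <;> linarith
      · rintro ⟨ha, hb⟩; constructor <;> linarith
    conv_lhs => rw [← hmap]
    rw [setLIntegral_map measurableSet_Ico hm (measurable_add_const _), hpre]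
  rw [h1]
  simp_rw [h2]
  rw [← lintegral_tsum]
  intro j
  exact (hm.comp (measurable_add_const _)).aemeasurable


/-- Periodization identity for the fourth-cumulant term in the asymptotics of the
sample autocovariances: with `G̃_{r;Δ}(x,u) = Σ_j |f(x,u+jΔ)| |f(x,u+(j+r)Δ)|`,
`∫∫ G̃_{p;Δ}(x,s)|f(x,s)||f(x,s+qΔ)| dx ds = ∫_{ℝ×[0,Δ]} G̃_{p;Δ} G̃_{q;Δ} dx du < ∞`. -/
theorem periodization_identity_fourth_cumulant
    (Δ : ℝ) (hΔ : 0 < Δ) (p q : ℤ) (f : ℝ × ℝ → ℝ) (hf : Measurable f)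
    (G : ℤ → ℝ × ℝ → ℝ≥0∞)
    (hG : ∀ (r : ℤ) (x u : ℝ), G r (x, u)
      = ∑' j : ℤ, ENNReal.ofReal
          (|f (x, u + (j : ℝ) * Δ)| * |f (x, u + ((j : ℝ) + (r : ℝ)) * Δ)|))
    (hL2 : (∫⁻ x : ℝ, ∫⁻ u in Icc (0:ℝ) Δ,
        (∑' j : ℤ, ENNReal.ofReal ((f (x, u + (j : ℝ) * Δ)) ^ 2)) ^ 2) < ⊤) :
    (∫⁻ x : ℝ, ∫⁻ s : ℝ,
        G p (x, s) * ENNReal.ofReal (|f (x, s)| * |f (x, s + (q : ℝ) * Δ)|))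
      = (∫⁻ x : ℝ, ∫⁻ u in Icc (0:ℝ) Δ, G p (x, u) * G q (x, u)) ∧
    (∫⁻ x : ℝ, ∫⁻ u in Icc (0:ℝ) Δ, G p (x, u) * G q (x, u)) < ⊤ := by
  have hfx : ∀ x : ℝ, Measurable fun t : ℝ => f (x, t) := fun x =>
    hf.comp measurable_prodMk_left
  -- measurability of `G r (x, ·)`
  have hGmeas : ∀ (r : ℤ) (x : ℝ), Measurable fun u : ℝ => G r (x, u) := by
    intro r x
    have hrw : (fun u : ℝ => G r (x, u)) = fun u : ℝ => ∑' j : ℤ, ENNReal.ofReal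
        (|f (x, u + (j : ℝ) * Δ)| * |f (x, u + ((j : ℝ) + (r : ℝ)) * Δ)|) :=
      funext fun u => hG r x u
    rw [hrw]
    refine Measurable.ennreal_tsum fun j => ?_
    exact ENNReal.measurable_ofReal.comp
      ((((hfx x).comp (measurable_add_const _)).abs.mul
        (((hfx x).comp (measurable_add_const _)).abs)))
  -- periodicity of `G r (x, ·)`
  have hper : ∀ (r k : ℤ) (x u : ℝ), G r (x, u + (k : ℝ) * Δ) = G r (x, u) := by
    intro r k x u
    rw [hG, hG]
    rw [← tsum_shift (fun j : ℤ => ENNReal.ofReal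
      (|f (x, u + (j : ℝ) * Δ)| * |f (x, u + ((j : ℝ) + (r : ℝ)) * Δ)|)) k]
    refine tsum_congr fun j => ?_
    push_cast
    ring_nf
  -- bound `G r (x,u) ≤ S x u`
  have hbound : ∀ (r : ℤ) (x u : ℝ),
      G r (x, u) ≤ ∑' j : ℤ, ENNReal.ofReal ((f (x, u + (j : ℝ) * Δ)) ^ 2) := by
    intro r x u
    set S : ℝ≥0∞ := ∑' j : ℤ, ENNReal.ofReal ((f (x, u + (j : ℝ) * Δ)) ^ 2) with hS
    rw [hG]
    have key : (2 : ℝ≥0∞) * ∑' j : ℤ, ENNReal.ofReal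
        (|f (x, u + (j : ℝ) * Δ)| * |f (x, u + ((j : ℝ) + (r : ℝ)) * Δ)|) ≤ 2 * S := by
      rw [← ENNReal.tsum_mul_left]
      calc ∑' j : ℤ, 2 * ENNReal.ofReal
            (|f (x, u + (j : ℝ) * Δ)| * |f (x, u + ((j : ℝ) + (r : ℝ)) * Δ)|)
          ≤ ∑' j : ℤ, (ENNReal.ofReal ((f (x, u + (j : ℝ) * Δ)) ^ 2)
              + ENNReal.ofReal ((f (x, u + ((j : ℝ) + (r : ℝ)) * Δ)) ^ 2)) := by
            refine ENNReal.tsum_le_tsum fun j => ?_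
            rw [← ENNReal.ofReal_add (sq_nonneg _) (sq_nonneg _)]
            have h2 : (2 : ℝ≥0∞) = ENNReal.ofReal (2 : ℝ) := by
              rw [ENNReal.ofReal_ofNat]
            rw [h2, ← ENNReal.ofReal_mul (by norm_num)]
            refine ENNReal.ofReal_le_ofReal ?_
            have := two_mul_le_add_sq (|f (x, u + (j : ℝ) * Δ)|)
              (|f (x, u + ((j : ℝ) + (r : ℝ)) * Δ)|)
            simpa [sq_abs, mul_assoc] using this
        _ = S + ∑' j : ℤ, ENNReal.ofReal ((f (x, u + ((j : ℝ) + (r : ℝ)) * Δ)) ^ 2) :=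
            ENNReal.tsum_add
        _ = S + S := by
            congr 1
            rw [hS, ← tsum_shift (fun j : ℤ => ENNReal.ofReal ((f (x, u + (j : ℝ) * Δ)) ^ 2)) r]
            refine tsum_congr fun j => ?_
            push_cast
            ring_nf
        _ = 2 * S := (two_mul S).symm
    exact (ENNReal.mul_le_mul_iff_right two_ne_zero ENNReal.ofNat_ne_top).mp key
  -- main pointwise identity (over `Ico`)
  have hmain : ∀ x : ℝ,
      (∫⁻ s : ℝ, G p (x, s) * ENNReal.ofReal (|f (x, s)| * |f (x, s + (q : ℝ) * Δ)|))
        = ∫⁻ u in Ico (0:ℝ) Δ, G p (x, u) * G q (x, u) := by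
    intro x
    have hmeasInt : Measurable fun s : ℝ =>
        G p (x, s) * ENNReal.ofReal (|f (x, s)| * |f (x, s + (q : ℝ) * Δ)|) := by
      refine (hGmeas p x).mul (ENNReal.measurable_ofReal.comp ?_)
      exact (hfx x).abs.mul (((hfx x).comp (measurable_add_const _)).abs)
    rw [lintegral_periodization hΔ hmeasInt]
    refine lintegral_congr fun u => ?_
    calc ∑' j : ℤ, G p (x, u + (j : ℝ) * Δ)
          * ENNReal.ofReal (|f (x, u + (j : ℝ) * Δ)| * |f (x, u + (j : ℝ) * Δ + (q : ℝ) * Δ)|)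
        = ∑' j : ℤ, G p (x, u)
          * ENNReal.ofReal (|f (x, u + (j : ℝ) * Δ)| * |f (x, u + ((j : ℝ) + (q : ℝ)) * Δ)|) := by
          refine tsum_congr fun j => ?_
          have harg : u + (j : ℝ) * Δ + (q : ℝ) * Δ = u + ((j : ℝ) + (q : ℝ)) * Δ := by ring
          rw [harg, hper p j x u]
      _ = G p (x, u) * G q (x, u) := by rw [ENNReal.tsum_mul_left, ← hG]
  have hIcc : ∀ g : ℝ → ℝ≥0∞,
      (∫⁻ u in Icc (0:ℝ) Δ, g u) = ∫⁻ u in Ico (0:ℝ) Δ, g u := fun g =>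
    (setLIntegral_congr (Ico_ae_eq_Icc (μ := (volume : Measure ℝ)))).symm
  constructor
  · refine lintegral_congr fun x => ?_
    rw [hmain x, hIcc]
  · refine lt_of_le_of_lt (lintegral_mono fun x => lintegral_mono fun u => ?_) hL2
    calc G p (x, u) * G q (x, u)
        ≤ (∑' j : ℤ, ENNReal.ofReal ((f (x, u + (j : ℝ) * Δ)) ^ 2))
          * (∑' j : ℤ, ENNReal.ofReal ((f (x, u + (j : ℝ) * Δ)) ^ 2)) :=
          mul_le_mul' (hbound p x u) (hbound q x u)
      _ = (∑' j : ℤ, ENNReal.ofReal ((f (x, u + (j : ℝ) * Δ)) ^ 2)) ^ 2 := (sq _).symm
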